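/- Let H be a hypergraph with λ-tw(H) ≤ k for a well-behaved width measure λ, and let H = H_0, H_1, …, H_ℓ be a sequence where H_{i+1} is obtained from H_i by adding an edge {u,v} (u,v nonadjacent in the Gaifman graph of H_i) such that λ_H(N_{\underline{H_i}}(u) ∩ N_{\underline{H_i}}(v)) > k. Then every tree decomposition of H of λ-width at most k is also a tree decomposition of H_ℓ; moreover, every (A,B)-separator S of H with λ_H(S) ≤ k is an (A,B)-separator of each H_i. -/

import Mathlib

open Set

universe u

variable {V : Type u}

/-- A set of vertices is independent if no two of its members are adjacent. -/
def IndepSet (G : SimpleGraph V) (I : Set V) : Prop :=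
  I.Pairwise (fun u v => ¬ G.Adj u v)

/-- A maximal independent set of a graph. -/
def MaxIndep (G : SimpleGraph V) (I : Set V) : Prop :=
  IndepSet G I ∧ ∀ J : Set V, IndepSet G J → I ⊆ J → J = I

/-- An induced matching with `k` edges `a i b i`: the `2k` endpoints are pairwise
distinct and the only edges of `G` between them are the matching edges themselves. -/
def IsInducedMatching (G : SimpleGraph V) (k : ℕ) (a b : Fin k → V) : Prop :=
  (∀ i, G.Adj (a i) (b i)) ∧
  ∀ i j, i ≠ j → ∀ x ∈ ({a i, b i} : Set V), ∀ y ∈ ({a j, b j} : Set V),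
    x ≠ y ∧ ¬ G.Adj x y

/-- `μ_G(S)`: maximum size of an induced matching each of whose edges meets `S`. -/
noncomputable def muS (G : SimpleGraph V) (S : Set V) : ℕ :=
  sSup {k | ∃ a b : Fin k → V, IsInducedMatching G k a b ∧ ∀ i, a i ∈ S ∨ b i ∈ S}

/-- `α_G(S)`: maximum size of an independent set contained in `S`. -/
noncomputable def alphaS (G : SimpleGraph V) (S : Set V) : ℕ :=
  sSup {n | ∃ I : Set V, I ⊆ S ∧ IndepSet G I ∧ I.ncard = n}

/-- The trace (restriction) of a set family on `S`. -/
def trace (S : Set V) (F : Set (Set V)) : Set (Set V) :=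
  (fun I => I ∩ S) '' F

/-- A hypergraph (given by its edge set) is a clutter if no edge properly contains another. -/
def IsClutter (E : Set (Set V)) : Prop := ∀ h ∈ E, ∀ f ∈ E, f ⊆ h → f = h

/-- A transversal of a hypergraph: a set meeting every edge. -/
def IsTransversal (E : Set (Set V)) (T : Set V) : Prop := ∀ h ∈ E, (T ∩ h).Nonempty

/-- The blocker: the clutter of all inclusion-wise minimal transversals. -/
def blocker (E : Set (Set V)) : Set (Set V) :=
  {T | IsTransversal E T ∧ ∀ T' ⊆ T, IsTransversal E T' → T' = T}

/-- Inclusion-wise minimal members of a family of sets. -/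
def minEdges (F : Set (Set V)) : Set (Set V) := {h ∈ F | ∀ f ∈ F, f ⊆ h → f = h}

/-- Deletion of a vertex from a clutter. -/
def del (E : Set (Set V)) (v : V) : Set (Set V) := {h ∈ E | v ∉ h}

/-- Contraction of a vertex in a clutter. -/
def contr (E : Set (Set V)) (v : V) : Set (Set V) :=
  minEdges ((fun h => h \ {v}) '' E)

/-- Contraction of a set of vertices in a clutter. -/
def contrSet (E : Set (Set V)) (B : Set V) : Set (Set V) :=
  minEdges ((fun h => h \ B) '' E)

/-- Join of two clutters: minimal elements of the union of the edge sets. -/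
def cJoin (E F : Set (Set V)) : Set (Set V) := minEdges (E ∪ F)

/-- Meet of two clutters: minimal elements of pairwise unions of edges. -/
def cMeet (E F : Set (Set V)) : Set (Set V) :=
  minEdges {s | ∃ h ∈ E, ∃ f ∈ F, s = h ∪ f}

/-- `H ∘ (h, u, v) = H[u; h∖{u}] ∨ H[v; h∖{v}]`. -/
def cOp (E : Set (Set V)) (h : Set V) (u v : V) : Set (Set V) :=
  cJoin (contrSet (del E u) (h \ {u})) (contrSet (del E v) (h \ {v}))

/-- An independent (stable) set of a hypergraph: contains no edge. -/
def HIndep (E : Set (Set V)) (I : Set V) : Prop := ∀ h ∈ E, ¬ h ⊆ I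

/-- A maximal independent set of a hypergraph. -/
def MaxHIndep (E : Set (Set V)) (I : Set V) : Prop :=
  HIndep E I ∧ ∀ J : Set V, HIndep E J → I ⊆ J → J = I

/-- The Gaifman graph of a hypergraph. -/
def gaif (E : Set (Set V)) : SimpleGraph V :=
  SimpleGraph.fromRel (fun u v => ∃ h ∈ E, u ∈ h ∧ v ∈ h)

/-- A well-behaved hypergraph width measure. -/
structure WellBehaved (lam : Set (Set V) → Set V → ℚ) : Prop where
  one : ∀ (E : Set (Set V)) (x : V), 1 ≤ lam E {x}
  subadd : ∀ (E : Set (Set V)) (S T : Set V), lam E (S ∪ T) ≤ lam E S + lam E T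
  add : ∀ (E : Set (Set V)) (S T : Set V), Disjoint S T →
    (∀ s ∈ S, ∀ t ∈ T, ¬ (gaif E).Adj s t) → lam E (S ∪ T) = lam E S + lam E T
  mono : ∀ (E F : Set (Set V)) (S T : Set V), E ⊆ F → S ⊆ T → lam F S ≤ lam E T

/-- `(T, bag)` is a tree decomposition of `G`. -/
structure IsTreeDecomp {ι : Type} (G : SimpleGraph V) (T : SimpleGraph ι)
    (bag : ι → Set V) : Prop where
  conn : T.Connected
  acyclic : T.IsAcyclic
  edge_cover : ∀ ⦃u v : V⦄, G.Adj u v → ∃ t, u ∈ bag t ∧ v ∈ bag t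
  vert_conn : ∀ v : V, (T.induce {t | v ∈ bag t}).Connected

/-- The `λ`-treewidth of `G` for a width measure `lam` on bags. -/
noncomputable def lamTW (G : SimpleGraph V) (lam : Set V → ℕ) : ℕ :=
  sInf {k | ∃ (ι : Type) (T : SimpleGraph ι) (bag : ι → Set V),
    IsTreeDecomp G T bag ∧ ∀ t, lam (bag t) ≤ k}

/-- `M(G)`: attach a pendant vertex to every vertex of `G`. -/
def pend (G : SimpleGraph V) : SimpleGraph (V ⊕ V) :=
  SimpleGraph.fromRel (fun x y =>
    match x, y with
    | Sum.inl u, Sum.inl v => G.Adj u v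
    | Sum.inl u, Sum.inr v => u = v
    | _, _ => False)

/-- `L²(G)`: vertices are the edges of `G`; two distinct edges are adjacent iff
their union induces a connected subgraph. -/
def L2 (G : SimpleGraph V) : SimpleGraph G.edgeSet :=
  SimpleGraph.fromRel (fun e f =>
    ∃ x ∈ (e : Sym2 V), ∃ y ∈ (f : Sym2 V), x = y ∨ G.Adj x y)

/-- The Gaifman graph with a set `S` of vertices removed (vertices of `S` become isolated). -/
def gaifMinus (E : Set (Set V)) (S : Set V) : SimpleGraph V :=
  SimpleGraph.fromRel (fun u v => (gaif E).Adj u v ∧ u ∉ S ∧ v ∉ S)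

/-- `S` is an `(A, B)`-separator: `A ∩ B ⊆ S` and every walk from `A` to `B` meets `S`. -/
def IsSeparator (G : SimpleGraph V) (A B S : Set V) : Prop :=
  A ∩ B ⊆ S ∧ ∀ a ∈ A, ∀ b ∈ B, ∀ p : G.Walk a b, ∃ x ∈ p.support, x ∈ S

/-- Minors of clutters: obtained by repeated deletions and contractions. -/
inductive IsMinor : Set (Set V) → Set (Set V) → Prop
  | refl (E : Set (Set V)) : IsMinor E E
  | delStep {F E : Set (Set V)} (v : V) : IsMinor F E → IsMinor (del F v) E
  | contrStep {F E : Set (Set V)} (v : V) : IsMinor F E → IsMinor (contr F v) E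


section Stmt17Aux

variable {ι : Type}

private lemma aux_walk_del {T : SimpleGraph ι} {C : Set ι} {s s' : ι}
    (hs : s ∉ C ∨ s' ∉ C) :
    ∀ {a b : C}, (T.induce C).Walk a b → (T.deleteEdges {s(s, s')}).Reachable a.1 b.1 := by
  intro a b q
  induction q with
  | nil => exact SimpleGraph.Reachable.refl _
  | @cons a c b h q ih =>
    refine SimpleGraph.Reachable.trans (SimpleGraph.Adj.reachable ?_) ih
    rw [SimpleGraph.deleteEdges_adj]
    refine ⟨h, ?_⟩
    rw [Set.mem_singleton_iff, Sym2.eq_iff]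
    rintro (⟨h1, h2⟩ | ⟨h1, h2⟩) <;>
      rcases hs with hs | hs
    · exact hs (h1 ▸ a.2)
    · exact hs (h2 ▸ c.2)
    · exact hs (h2 ▸ c.2)
    · exact hs (h1 ▸ a.2)

private lemma aux_reach_del {T : SimpleGraph ι} {C : Set ι}
    (hC : (T.induce C).Connected) {x y : ι} (hx : x ∈ C) (hy : y ∈ C)
    {s s' : ι} (hs : s ∉ C ∨ s' ∉ C) :
    (T.deleteEdges {s(s, s')}).Reachable x y := by
  obtain ⟨q⟩ := hC.preconnected ⟨x, hx⟩ ⟨y, hy⟩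
  exact aux_walk_del hs q

private lemma aux_exists_edge {T : SimpleGraph ι} {U : Set ι} :
    ∀ {t0 t1 : ι} (p : T.Walk t0 t1), p.IsTrail → t0 ∈ U → t1 ∉ U →
    ∃ s s', T.Adj s s' ∧ s ∈ U ∧ s' ∉ U ∧
      (T.deleteEdges {s(s, s')}).Reachable s' t1 := by
  intro t0 t1 p
  induction p with
  | nil => intro _ h0 h1; exact absurd h0 h1
  | @cons a c b h q ih =>
    intro htr h0 h1
    rw [SimpleGraph.Walk.isTrail_cons] at htr
    by_cases hc : c ∈ U
    · exact ih htr.1 hc h1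
    · refine ⟨a, c, h, h0, hc, ⟨q.toDeleteEdges _ ?_⟩⟩
      intro e he hmem
      rw [Set.mem_singleton_iff] at hmem
      exact htr.2 (hmem ▸ he)

private lemma bag_lemma {ι : Type} {T : SimpleGraph ι} {V : Type} {bag : ι → Set V}
    (hconn : T.Connected) (hacyc : T.IsAcyclic)
    (hvc : ∀ v : V, (T.induce {t | v ∈ bag t}).Connected)
    {u v : V} (W : Set V)
    (hWu : ∀ w ∈ W, ∃ t, u ∈ bag t ∧ w ∈ bag t)
    (hWv : ∀ w ∈ W, ∃ t, v ∈ bag t ∧ w ∈ bag t)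
    (hno : ¬ ∃ t, u ∈ bag t ∧ v ∈ bag t) :
    ∃ t, W ⊆ bag t := by
  classical
  obtain ⟨t0, h0⟩ := (hvc u).nonempty
  obtain ⟨t1, h1⟩ := (hvc v).nonempty
  have ht1u : t1 ∉ {t | u ∈ bag t} := fun h => hno ⟨t1, h, h1⟩
  obtain ⟨p⟩ := hconn.preconnected t0 t1
  obtain ⟨s, s', hadj, hsU, hs'U, hreach⟩ :=
    aux_exists_edge (p.toPath : T.Walk t0 t1) p.toPath.2.isTrail h0 ht1u
  have hbr : ¬ (T.deleteEdges {s(s, s')}).Reachable s s' :=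
    (SimpleGraph.isAcyclic_iff_forall_adj_isBridge.mp hacyc hadj :)
  have hsv : s ∉ {t | v ∈ bag t} := fun h => hno ⟨s, hsU, h⟩
  refine ⟨s, fun w hw => ?_⟩
  obtain ⟨x, hux, hwx⟩ := hWu w hw
  obtain ⟨y, hvy, hwy⟩ := hWv w hw
  have r1 : (T.deleteEdges {s(s, s')}).Reachable s x :=
    aux_reach_del (hvc u) hsU hux (Or.inr hs'U)
  have r2 : (T.deleteEdges {s(s, s')}).Reachable t1 y :=
    aux_reach_del (hvc v) h1 hvy (Or.inl hsv)
  have r3 : (T.deleteEdges {s(s, s')}).Reachable s' y := hreach.trans r2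
  have hxy : ¬ (T.deleteEdges {s(s, s')}).Reachable x y :=
    fun r => hbr (r1.trans (r.trans r3.symm))
  by_contra hsw
  exact hxy (aux_reach_del (hvc w) hwx hwy (Or.inl hsw))

private lemma gaif_adj {V : Type u} {E : Set (Set V)} {x y : V} :
    (gaif E).Adj x y ↔ x ≠ y ∧ ∃ h ∈ E, x ∈ h ∧ y ∈ h := by
  simp only [gaif, SimpleGraph.fromRel_adj]
  constructor
  · rintro ⟨hne, h | ⟨h, hE, hy, hx⟩⟩
    · exact ⟨hne, h⟩
    · exact ⟨hne, h, hE, hx, hy⟩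
  · rintro ⟨hne, h⟩; exact ⟨hne, Or.inl h⟩

private lemma gaif_union_adj {V : Type u} {F : Set (Set V)} {u' v' : V} (huv : u' ≠ v') {x y : V} :
    (gaif (F ∪ {{u', v'}})).Adj x y ↔
      (gaif F).Adj x y ∨ (x = u' ∧ y = v') ∨ (x = v' ∧ y = u') := by
  rw [gaif_adj, gaif_adj]
  constructor
  · rintro ⟨hne, h, hmem, hx, hy⟩
    rcases hmem with hF | hP
    · exact Or.inl ⟨hne, h, hF, hx, hy⟩
    · rw [Set.mem_singleton_iff] at hP
      subst hP
      rcases hx with rfl | hx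
      · rcases hy with rfl | hy
        · exact absurd rfl hne
        · rw [Set.mem_singleton_iff] at hy
          exact Or.inr (Or.inl ⟨rfl, hy⟩)
      · rw [Set.mem_singleton_iff] at hx
        subst hx
        rcases hy with rfl | hy
        · exact Or.inr (Or.inr ⟨rfl, rfl⟩)
        · rw [Set.mem_singleton_iff] at hy
          exact absurd hy.symm hne
  · rintro (⟨hne, h, hF, hx, hy⟩ | ⟨rfl, rfl⟩ | ⟨rfl, rfl⟩)
    · exact ⟨hne, h, Or.inl hF, hx, hy⟩
    · exact ⟨huv, ({x, y} : Set V), Set.mem_union_right _ rfl,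
        Set.mem_insert _ _, Set.mem_insert_of_mem _ rfl⟩
    · exact ⟨huv.symm, ({y, x} : Set V), Set.mem_union_right _ rfl,
        Set.mem_insert_of_mem _ rfl, Set.mem_insert _ _⟩

private lemma replace_walk {V : Type u} {G G' : SimpleGraph V} {u v w : V}
    (hadj : ∀ x y, G'.Adj x y → G.Adj x y ∨ (x = u ∧ y = v) ∨ (x = v ∧ y = u))
    (huw : G.Adj u w) (hvw : G.Adj v w) {S : Set V} (hwS : w ∉ S) :
    ∀ {a b : V} (p : G'.Walk a b), (∀ x ∈ p.support, x ∉ S) →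
      ∃ q : G.Walk a b, ∀ x ∈ q.support, x ∉ S := by
  intro a b p
  induction p with
  | nil => intro h; exact ⟨SimpleGraph.Walk.nil, h⟩
  | @cons a c b h p ih =>
    intro hp
    have haS : a ∉ S := hp a (SimpleGraph.Walk.start_mem_support _)
    have hpS : ∀ x ∈ p.support, x ∉ S := fun x hx =>
      hp x (by rw [SimpleGraph.Walk.support_cons]; exact List.mem_cons_of_mem _ hx)
    obtain ⟨q, hq⟩ := ih hpS
    rcases hadj _ _ h with h' | ⟨rfl, rfl⟩ | ⟨rfl, rfl⟩
    · refine ⟨SimpleGraph.Walk.cons h' q, ?_⟩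
      intro x hx
      rw [SimpleGraph.Walk.support_cons] at hx
      rcases List.mem_cons.mp hx with rfl | hx
      exacts [haS, hq x hx]
    · refine ⟨SimpleGraph.Walk.cons huw (SimpleGraph.Walk.cons hvw.symm q), ?_⟩
      intro x hx
      rw [SimpleGraph.Walk.support_cons, SimpleGraph.Walk.support_cons] at hx
      rcases List.mem_cons.mp hx with rfl | hx
      · exact haS
      rcases List.mem_cons.mp hx with rfl | hx
      exacts [hwS, hq x hx]
    · refine ⟨SimpleGraph.Walk.cons hvw (SimpleGraph.Walk.cons huw.symm q), ?_⟩
      intro x hx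
      rw [SimpleGraph.Walk.support_cons, SimpleGraph.Walk.support_cons] at hx
      rcases List.mem_cons.mp hx with rfl | hx
      · exact haS
      rcases List.mem_cons.mp hx with rfl | hx
      exacts [hwS, hq x hx]

end Stmt17Aux

/-- adding edges between nonadjacent vertices whose common Gaifman
neighbourhood has `λ`-value above `k` preserves tree decompositions of width `≤ k`
and `(A,B)`-separators of `λ`-value `≤ k`. -/
theorem stmt_17 {V : Type} [Fintype V] (lam : Set (Set V) → Set V → ℚ)
    (hl : WellBehaved lam) (E : Set (Set V)) (k : ℚ)
    (htw : ∃ (ι : Type) (T : SimpleGraph ι) (bag : ι → Set V),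
      IsTreeDecomp (gaif E) T bag ∧ ∀ t, lam E (bag t) ≤ k)
    (ℓ : ℕ) (Es : ℕ → Set (Set V)) (h0 : Es 0 = E)
    (hstep : ∀ i < ℓ, ∃ u v : V, u ≠ v ∧ ¬ (gaif (Es i)).Adj u v ∧
      k < lam E ({w | (gaif (Es i)).Adj u w} ∩ {w | (gaif (Es i)).Adj v w}) ∧
      Es (i + 1) = Es i ∪ {{u, v}}) :
    (∀ (ι : Type) (T : SimpleGraph ι) (bag : ι → Set V),
      IsTreeDecomp (gaif E) T bag → (∀ t, lam E (bag t) ≤ k) →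
      IsTreeDecomp (gaif (Es ℓ)) T bag) ∧
    (∀ A B S : Set V, IsSeparator (gaif E) A B S → lam E S ≤ k →
      ∀ i ≤ ℓ, IsSeparator (gaif (Es i)) A B S) := by
  constructor
  · intro ι T bag hTD hk
    suffices h : ∀ i ≤ ℓ, IsTreeDecomp (gaif (Es i)) T bag from h ℓ le_rfl
    intro i
    induction i with
    | zero => intro _; rw [h0]; exact hTD
    | succ i ih =>
      intro hi
      have hTDi := ih (Nat.le_of_succ_le hi)
      obtain ⟨u, v, huv, hnadj, hW, hEs⟩ := hstep i (Nat.lt_of_succ_le hi)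
      have hbag : ∃ t, u ∈ bag t ∧ v ∈ bag t := by
        by_contra hno
        obtain ⟨t, hWt⟩ := bag_lemma hTDi.conn hTDi.acyclic hTDi.vert_conn
          ({w | (gaif (Es i)).Adj u w} ∩ {w | (gaif (Es i)).Adj v w})
          (fun w hw => hTDi.edge_cover hw.1)
          (fun w hw => hTDi.edge_cover hw.2) hno
        exact absurd hW (not_lt.mpr (le_trans
          (hl.mono E E _ (bag t) subset_rfl hWt) (hk t)))
      rw [hEs]
      exact { conn := hTDi.conn, acyclic := hTDi.acyclic,
              vert_conn := hTDi.vert_conn,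
              edge_cover := by
                intro x y hxy
                rcases (gaif_union_adj huv).mp hxy with h | ⟨rfl, rfl⟩ | ⟨rfl, rfl⟩
                · exact hTDi.edge_cover h
                · exact hbag
                · obtain ⟨t, h1, h2⟩ := hbag; exact ⟨t, h2, h1⟩ }
  · intro A B S hsep hS i
    induction i with
    | zero => intro _; rw [h0]; exact hsep
    | succ i ih =>
      intro hi
      have hsepi := ih (Nat.le_of_succ_le hi)
      obtain ⟨u, v, huv, hnadj, hW, hEs⟩ := hstep i (Nat.lt_of_succ_le hi)
      have hWS : ¬ ({w | (gaif (Es i)).Adj u w} ∩ {w | (gaif (Es i)).Adj v w}) ⊆ S :=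
        fun hsub => absurd hW (not_lt.mpr (le_trans
          (hl.mono E E _ S subset_rfl hsub) hS))
      obtain ⟨w, hwW, hwS⟩ := Set.not_subset.mp hWS
      have hadj' : ∀ x y, (gaif (Es (i + 1))).Adj x y →
          (gaif (Es i)).Adj x y ∨ (x = u ∧ y = v) ∨ (x = v ∧ y = u) := by
        rw [hEs]; intro x y h; exact (gaif_union_adj huv).mp h
      refine ⟨hsepi.1, ?_⟩
      intro a ha b hb p
      by_contra hcon
      push_neg at hcon
      obtain ⟨q, hq⟩ := replace_walk hadj' hwW.1 hwW.2 hwS p hcon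
      obtain ⟨x, hx, hxS⟩ := hsepi.2 a ha b hb q
      exact hq x hx hxS
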